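/- arXiv:1512.08088 — 4 statements merged into one kernel-verified Lean document; each statement's English description precedes it below -/
import Mathlib

section
/- Let A be a commutative semiring with twisted product (a,b) ∗ (c,d) = (ac+bd, ad+bc) on A × A. An equivalence relation ρ on A is a congruence (i.e., compatible with addition and multiplication) if and only if ρ, viewed as a subset of A × A, is an ideal of the semiring (A × A, +, ∗). -/
/-- The twisted product on `A × A`. -/
def tmul {A : Type*} [CommSemiring A] (p q : A × A) : A × A :=
  (p.1 * q.1 + p.2 * q.2, p.1 * q.2 + p.2 * q.1)

/-- An equivalence relation `ρ` on a commutative semiring `A` is a congruence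
(compatible with addition and multiplication) if and only if `ρ`, viewed as a subset of
`A × A`, is an ideal of the semiring `(A × A, +, ∗)` with the twisted product. -/
theorem congruence_iff_ideal {A : Type*} [CommSemiring A] (ρ : Set (A × A))
    (hrefl : ∀ a : A, (a, a) ∈ ρ)
    (hsymm : ∀ a b : A, (a, b) ∈ ρ → (b, a) ∈ ρ)
    (htrans : ∀ a b c : A, (a, b) ∈ ρ → (b, c) ∈ ρ → (a, c) ∈ ρ) :
    ((∀ a b c d : A, (a, b) ∈ ρ → (c, d) ∈ ρ → (a + c, b + d) ∈ ρ) ∧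
      (∀ a b c d : A, (a, b) ∈ ρ → (c, d) ∈ ρ → (a * c, b * d) ∈ ρ)) ↔
    (ρ.Nonempty ∧ (∀ p ∈ ρ, ∀ q ∈ ρ, p + q ∈ ρ) ∧
      (∀ s : A × A, ∀ p ∈ ρ, tmul s p ∈ ρ)) := by
  constructor
  · rintro ⟨hadd, hmul⟩
    refine ⟨⟨(0,0), hrefl 0⟩, ?_, ?_⟩
    · rintro ⟨a,b⟩ hp ⟨c,d⟩ hq
      exact hadd a b c d hp hq
    · rintro ⟨s1,s2⟩ ⟨p1,p2⟩ hp
      exact hadd _ _ _ _ (hmul s1 s1 p1 p2 (hrefl s1) hp)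
        (hmul s2 s2 p2 p1 (hrefl s2) (hsymm _ _ hp))
  · rintro ⟨-, hadd, hmul⟩
    constructor
    · intro a b c d h1 h2
      exact hadd (a,b) h1 (c,d) h2
    · intro a b c d h1 h2
      have h3 := hmul (c, 0) (a, b) h1
      have h4 := hmul (b, 0) (c, d) h2
      simp [tmul] at h3 h4
      exact htrans _ _ _ (by rwa [mul_comm c a, mul_comm c b] at h3) h4
end

section
/- Let ρ be a congruence on a commutative semiring A. Define √ρ = {(a,b) ∈ A × A : (a+c, b+c)^{∗n} ∈ ρ for some c ∈ A and some positive integer n}, where ∗ denotes the twisted product on A × A. Then √ρ is a congruence on A containing ρ, and (√ρ)₊ = √ρ, where σ₊ = {(a,b) : (a+c,b+c) ∈ σ for some c}. -/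
/-- Twisted powers, with `(a,b)^{∗0} = (1,0)`. -/
def tpow {A : Type*} [CommSemiring A] (p : A × A) : ℕ → A × A
  | 0 => (1, 0)
  | n + 1 => tmul (tpow p n) p

/-- `ρ` is a congruence on the commutative semiring `A`. -/
def IsCong {A : Type*} [CommSemiring A] (ρ : Set (A × A)) : Prop :=
  (∀ a : A, (a, a) ∈ ρ) ∧
  (∀ a b : A, (a, b) ∈ ρ → (b, a) ∈ ρ) ∧
  (∀ a b c : A, (a, b) ∈ ρ → (b, c) ∈ ρ → (a, c) ∈ ρ) ∧
  (∀ a b c d : A, (a, b) ∈ ρ → (c, d) ∈ ρ → (a + c, b + d) ∈ ρ) ∧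
  (∀ a b c d : A, (a, b) ∈ ρ → (c, d) ∈ ρ → (a * c, b * d) ∈ ρ)

/-- `σ₊ = {(a,b) : (a+c, b+c) ∈ σ for some c}`. -/
def plusPart {A : Type*} [CommSemiring A] (σ : Set (A × A)) : Set (A × A) :=
  {p | ∃ c : A, (p.1 + c, p.2 + c) ∈ σ}

/-- `√ρ = {(a,b) : (a+c, b+c)^{∗n} ∈ ρ for some c and some positive n}`. -/
def rad {A : Type*} [CommSemiring A] (ρ : Set (A × A)) : Set (A × A) :=
  {p | ∃ c : A, ∃ n : ℕ, 0 < n ∧ tpow (p.1 + c, p.2 + c) n ∈ ρ}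

section TW
variable {A : Type*} [CommSemiring A]

def TW (A : Type*) := A × A

def toTW : A × A → TW A := id

instance : Add (TW A) := ⟨fun p q => toTW ((p.1 + q.1, p.2 + q.2) : A × A)⟩
instance : Mul (TW A) := ⟨fun p q => toTW (tmul (p : A × A) q)⟩
instance : Zero (TW A) := ⟨toTW ((0, 0) : A × A)⟩
instance : One (TW A) := ⟨toTW ((1, 0) : A × A)⟩

@[simp] lemma TW.add_fst (p q : TW A) : (p + q).1 = p.1 + q.1 := rfl
@[simp] lemma TW.add_snd (p q : TW A) : (p + q).2 = p.2 + q.2 := rfl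
@[simp] lemma TW.mul_fst (p q : TW A) : (p * q).1 = p.1 * q.1 + p.2 * q.2 := rfl
@[simp] lemma TW.mul_snd (p q : TW A) : (p * q).2 = p.1 * q.2 + p.2 * q.1 := rfl
@[simp] lemma TW.zero_fst : (0 : TW A).1 = 0 := rfl
@[simp] lemma TW.zero_snd : (0 : TW A).2 = 0 := rfl
@[simp] lemma TW.one_fst : (1 : TW A).1 = 1 := rfl
@[simp] lemma TW.one_snd : (1 : TW A).2 = 0 := rfl

lemma TW.ext {p q : TW A} (h1 : p.1 = q.1) (h2 : p.2 = q.2) : p = q :=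
  Prod.ext h1 h2

instance : CommSemiring (TW A) where
  add_assoc a b c := TW.ext (by simp [add_assoc]) (by simp [add_assoc])
  zero_add a := TW.ext (by simp) (by simp)
  add_zero a := TW.ext (by simp) (by simp)
  add_comm a b := TW.ext (by simp [add_comm]) (by simp [add_comm])
  nsmul := nsmulRec
  mul_assoc a b c := TW.ext (by simp; ring) (by simp; ring)
  one_mul a := TW.ext (by simp) (by simp)
  mul_one a := TW.ext (by simp) (by simp)
  left_distrib a b c := TW.ext (by simp; ring) (by simp; ring)
  right_distrib a b c := TW.ext (by simp; ring) (by simp; ring)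
  zero_mul a := TW.ext (by simp) (by simp)
  mul_zero a := TW.ext (by simp) (by simp)
  mul_comm a b := TW.ext (by simp; ring) (by simp; ring)

lemma tpow_eq_pow (p : A × A) (n : ℕ) : toTW (tpow p n) = (toTW p) ^ n := by
  induction n with
  | zero => rfl
  | succ n ih => rw [pow_succ, ← ih]; rfl

end TW

section Main
variable {A : Type*} [CommSemiring A]

/-- The set of `ρ`-related pairs as an ideal of the twisted semiring. -/
def radIdeal (ρ : Set (A × A)) (hρ : IsCong ρ) : Ideal (TW A) where
  carrier := {p | ((p.1, p.2) : A × A) ∈ ρ}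
  add_mem' {p q} hp hq := by
    simpa using hρ.2.2.2.1 _ _ _ _ hp hq
  zero_mem' := by simpa using hρ.1 0
  smul_mem' c x hx := by
    have h1 : (c.1 * x.1, c.1 * x.2) ∈ ρ := hρ.2.2.2.2 _ _ _ _ (hρ.1 c.1) hx
    have h2 : (c.2 * x.2, c.2 * x.1) ∈ ρ := hρ.2.2.2.2 _ _ _ _ (hρ.1 c.2) (hρ.2.1 _ _ hx)
    have := hρ.2.2.2.1 _ _ _ _ h1 h2
    simp only [smul_eq_mul, Set.mem_setOf_eq]
    simpa using this

lemma mem_radIdeal {ρ : Set (A × A)} (hρ : IsCong ρ) (p : A × A) :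
    toTW p ∈ radIdeal ρ hρ ↔ p ∈ ρ := Iff.rfl

lemma tpow_swap (a b : A) (n : ℕ) :
    tpow (b, a) n = tpow (a, b) n ∨
      tpow (b, a) n = ((tpow (a, b) n).2, (tpow (a, b) n).1) := by
  induction n with
  | zero => exact Or.inl rfl
  | succ n ih =>
    rcases ih with h | h <;> rw [tpow, tpow, h] <;> [right; left] <;>
      exact Prod.ext (by simp [tmul]; try ring) (by simp [tmul]; try ring)

lemma mem_rad_iff {ρ : Set (A × A)} (hρ : IsCong ρ) (a b : A) :
    (a, b) ∈ rad ρ ↔ ∃ c : A, ∃ n : ℕ, 0 < n ∧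
      (toTW ((a + c, b + c) : A × A)) ^ n ∈ radIdeal ρ hρ := by
  constructor
  · rintro ⟨c, n, hn, h⟩
    exact ⟨c, n, hn, by rw [← tpow_eq_pow]; exact h⟩
  · rintro ⟨c, n, hn, h⟩
    exact ⟨c, n, hn, by rwa [← tpow_eq_pow] at h⟩

lemma rad_scale {ρ : Set (A × A)} (hρ : IsCong ρ) {a b : A} (r : A)
    (h : (a, b) ∈ rad ρ) : (r * a, r * b) ∈ rad ρ := by
  rw [mem_rad_iff hρ] at h ⊢
  obtain ⟨c, n, hn, h⟩ := h
  refine ⟨r * c, n, hn, ?_⟩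
  have key : toTW ((r * a + r * c, r * b + r * c) : A × A)
      = toTW ((r, 0) : A × A) * toTW ((a + c, b + c) : A × A) :=
    TW.ext (by rw [TW.mul_fst]; simp [toTW, tmul]; ring) (by rw [TW.mul_snd]; simp [toTW, tmul]; ring)
  rw [key, mul_pow]
  exact Ideal.mul_mem_left _ _ h

lemma rad_trans {ρ : Set (A × A)} (hρ : IsCong ρ) {a b c : A}
    (h1 : (a, b) ∈ rad ρ) (h2 : (b, c) ∈ rad ρ) : (a, c) ∈ rad ρ := by
  rw [mem_rad_iff hρ] at h1 h2 ⊢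
  obtain ⟨e, m, hm, h1⟩ := h1
  obtain ⟨f, n, hn, h2⟩ := h2
  refine ⟨b + e + f, m + n, by omega, ?_⟩
  have key : toTW ((a + (b + e + f), c + (b + e + f)) : A × A)
      = toTW ((a + e, b + e) : A × A) + toTW ((b + f, c + f) : A × A) :=
    TW.ext (by rw [TW.add_fst]; simp [toTW]; ring) (by rw [TW.add_snd]; simp [toTW]; ring)
  rw [key]
  exact (radIdeal ρ hρ).add_pow_mem_of_pow_mem_of_le h1 h2 (by omega)

end Main

/-- For a congruence `ρ` on a commutative semiring `A`, the radical `√ρ` is a congruence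
containing `ρ`, and `(√ρ)₊ = √ρ`. -/
theorem rad_isCong {A : Type*} [CommSemiring A] (ρ : Set (A × A)) (hρ : IsCong ρ) :
    IsCong (rad ρ) ∧ ρ ⊆ rad ρ ∧ plusPart (rad ρ) = rad ρ := by
  refine ⟨⟨?_, ?_, ?_, ?_, ?_⟩, ?_, ?_⟩
  · -- refl
    intro a
    exact ⟨0, 1, one_pos, by simpa [tpow, tmul] using hρ.1 a⟩
  · -- symm
    rintro a b ⟨c, n, hn, h⟩
    refine ⟨c, n, hn, ?_⟩
    rcases tpow_swap (a + c) (b + c) n with he | he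
    · show tpow (b + c, a + c) n ∈ ρ
      rw [he]; exact h
    · show tpow (b + c, a + c) n ∈ ρ
      rw [he]
      exact hρ.2.1 _ _ h
  · -- trans
    intro a b c h1 h2
    exact rad_trans hρ h1 h2
  · -- add
    intro a b c d h1 h2
    rw [mem_rad_iff hρ] at h1 h2 ⊢
    obtain ⟨e, m, hm, h1⟩ := h1
    obtain ⟨f, n, hn, h2⟩ := h2
    refine ⟨e + f, m + n, by omega, ?_⟩
    have key : toTW ((a + c + (e + f), b + d + (e + f)) : A × A)
        = toTW ((a + e, b + e) : A × A) + toTW ((c + f, d + f) : A × A) :=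
      TW.ext (by rw [TW.add_fst]; simp [toTW]; ring) (by rw [TW.add_snd]; simp [toTW]; ring)
    rw [key]
    exact (radIdeal ρ hρ).add_pow_mem_of_pow_mem_of_le h1 h2 (by omega)
  · -- mul
    intro a b c d h1 h2
    have t1 : (a * c, a * d) ∈ rad ρ := rad_scale hρ a h2
    have t2 : (a * d, b * d) ∈ rad ρ := by
      have := rad_scale hρ d h1
      rwa [mul_comm d a, mul_comm d b] at this
    exact rad_trans hρ t1 t2
  · -- ρ ⊆ rad ρ
    rintro ⟨a, b⟩ hab
    exact ⟨0, 1, one_pos, by simpa [tpow, tmul] using hab⟩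
  · -- plusPart
    ext ⟨a, b⟩
    simp only [plusPart, rad, Set.mem_setOf_eq]
    constructor
    · rintro ⟨c, d, n, hn, h⟩
      exact ⟨c + d, n, hn, by rw [← add_assoc, ← add_assoc]; exact h⟩
    · intro h
      exact ⟨0, by simpa using h⟩
end

section
/- Let A be a commutative semiring, R a relation on A, and a,b ∈ A. Then (a,b) ∈ R^c (the congruence generated by R) if and only if a = b, or there exists a finite sequence a = z₁, z₂, …, zₙ = b in A such that for each i, either (zᵢ, zᵢ₊₁) ∈ R^L or (zᵢ₊₁, zᵢ) ∈ R^L, where R^L = {(cx+y, dx+y) : (c,d) ∈ R, x,y ∈ A}. -/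
/-- The congruence generated by a relation `R`: the smallest congruence containing `R`. -/
def conGenS {A : Type*} [CommSemiring A] (R : Set (A × A)) : Set (A × A) :=
  ⋂₀ {σ | IsCong σ ∧ R ⊆ σ}

/-- `R^L = {(cx+y, dx+y) : (c,d) ∈ R, x,y ∈ A}`. -/
def relL {A : Type*} [CommSemiring A] (R : Set (A × A)) : Set (A × A) :=
  {p | ∃ c d x y : A, (c, d) ∈ R ∧ p = (c * x + y, d * x + y)}

section
variable {A : Type*} [CommSemiring A] (R : Set (A × A))

def chainR (a b : A) : Prop :=
  a = b ∨ ∃ (n : ℕ) (z : ℕ → A), 0 < n ∧ z 0 = a ∧ z n = b ∧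
    ∀ i < n, (z i, z (i + 1)) ∈ relL R ∨ (z (i + 1), z i) ∈ relL R

variable {R}

lemma chain_of_relL {a b : A} (h : (a, b) ∈ relL R) : chainR R a b := by
  refine Or.inr ⟨1, fun i => if i = 0 then a else b, one_pos, by simp, by simp, ?_⟩
  intro i hi
  interval_cases i
  simpa using Or.inl h

lemma chain_symm {a b : A} (h : chainR R a b) : chainR R b a := by
  rcases h with rfl | ⟨n, z, hn, h0, hN, hstep⟩
  · exact Or.inl rfl
  refine Or.inr ⟨n, fun i => z (n - i), hn, by simpa, by simpa, ?_⟩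
  intro i hi
  simp only
  have e1 : n - i = (n - (i + 1)) + 1 := by omega
  rw [e1]
  rcases hstep (n - (i + 1)) (by omega) with h' | h'
  · exact Or.inr h'
  · exact Or.inl h'

lemma chain_trans {a b c : A} (h1 : chainR R a b) (h2 : chainR R b c) :
    chainR R a c := by
  rcases h1 with rfl | ⟨n, z, hn, hz0, hzn, hzs⟩
  · exact h2
  rcases h2 with rfl | ⟨m, w, hm, hw0, hwm, hws⟩
  · exact Or.inr ⟨n, z, hn, hz0, hzn, hzs⟩
  refine Or.inr ⟨n + m, fun i => if i ≤ n then z i else w (i - n), by omega, ?_, ?_, ?_⟩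
  · simpa using hz0
  · simp only
    rw [if_neg (by omega)]
    have : n + m - n = m := by omega
    rw [this, hwm]
  · intro i hi
    simp only
    by_cases hin : i + 1 ≤ n
    · rw [if_pos (by omega), if_pos hin]
      exact hzs i (by omega)
    · have e1 : (if i ≤ n then z i else w (i - n)) = w (i - n) := by
        by_cases h' : i ≤ n
        · have hieq : i = n := by omega
          subst hieq
          rw [if_pos le_rfl]
          simp only [Nat.sub_self]
          rw [hzn, hw0]
        · rw [if_neg h']
      rw [e1, if_neg (by omega)]
      have e2 : i + 1 - n = (i - n) + 1 := by omega
      rw [e2]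
      exact hws (i - n) (by omega)

lemma chain_map {f : A → A} (hf : ∀ p q : A, (p, q) ∈ relL R → (f p, f q) ∈ relL R)
    {a b : A} (h : chainR R a b) : chainR R (f a) (f b) := by
  rcases h with rfl | ⟨n, z, hn, h0, hN, hs⟩
  · exact Or.inl rfl
  refine Or.inr ⟨n, fun i => f (z i), hn, by simp [h0], by simp [hN], ?_⟩
  intro i hi
  rcases hs i hi with h' | h'
  · exact Or.inl (hf _ _ h')
  · exact Or.inr (hf _ _ h')

lemma relL_add (t : A) {p q : A} (h : (p, q) ∈ relL R) : (p + t, q + t) ∈ relL R := by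
  obtain ⟨c, d, x, y, hcd, heq⟩ := h
  rw [Prod.ext_iff] at heq
  obtain ⟨h1, h2⟩ := heq
  subst h1; subst h2
  exact ⟨c, d, x, y + t, hcd, by rw [Prod.ext_iff]; constructor <;> ring⟩

lemma relL_mul (t : A) {p q : A} (h : (p, q) ∈ relL R) : (p * t, q * t) ∈ relL R := by
  obtain ⟨c, d, x, y, hcd, heq⟩ := h
  rw [Prod.ext_iff] at heq
  obtain ⟨h1, h2⟩ := heq
  subst h1; subst h2
  exact ⟨c, d, x * t, y * t, hcd, by rw [Prod.ext_iff]; constructor <;> ring⟩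

lemma chain_isCong : IsCong {p : A × A | chainR R p.1 p.2} := by
  refine ⟨fun a => Or.inl rfl, fun a b h => chain_symm h, fun a b c h1 h2 => chain_trans h1 h2,
    ?_, ?_⟩
  · intro a b c d h1 h2
    have ha : chainR R (a + c) (b + c) := chain_map (fun p q h => relL_add c h) h1
    have hb : chainR R (c + b) (d + b) := chain_map (fun p q h => relL_add b h) h2
    rw [add_comm c b, add_comm d b] at hb
    exact chain_trans ha hb
  · intro a b c d h1 h2
    have ha : chainR R (a * c) (b * c) := chain_map (fun p q h => relL_mul c h) h1
    have hb : chainR R (c * b) (d * b) := chain_map (fun p q h => relL_mul b h) h2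
    rw [mul_comm c b, mul_comm d b] at hb
    exact chain_trans ha hb

lemma relL_subset {σ : Set (A × A)} (hσ : IsCong σ) (hR : R ⊆ σ) : relL R ⊆ σ := by
  rintro ⟨p, q⟩ ⟨c, d, x, y, hcd, heq⟩
  rw [Prod.ext_iff] at heq
  obtain ⟨h1, h2⟩ := heq
  simp only at h1 h2
  subst h1; subst h2
  exact hσ.2.2.2.1 _ _ _ _ (hσ.2.2.2.2 _ _ _ _ (hR hcd) (hσ.1 x)) (hσ.1 y)

end


/-- `(a,b) ∈ R^c` iff `a = b` or there is a finite sequence `a = z₀, …, zₙ = b` with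
each consecutive pair (in one direction or the other) in `R^L`. -/
theorem mem_conGen_iff_chain {A : Type*} [CommSemiring A] (R : Set (A × A)) (a b : A) :
    (a, b) ∈ conGenS R ↔
      a = b ∨ ∃ (n : ℕ) (z : ℕ → A), 0 < n ∧ z 0 = a ∧ z n = b ∧
        ∀ i < n, (z i, z (i + 1)) ∈ relL R ∨ (z (i + 1), z i) ∈ relL R := by
  constructor
  · intro h
    have hmem : {p : A × A | chainR R p.1 p.2} ∈ {σ | IsCong σ ∧ R ⊆ σ} := by
      refine ⟨chain_isCong, ?_⟩
      rintro ⟨c, d⟩ hcd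
      have : (c * 1 + 0, d * 1 + 0) ∈ relL R := ⟨c, d, 1, 0, hcd, rfl⟩
      simpa using chain_of_relL this
    exact h _ hmem
  · rintro (rfl | ⟨n, z, hn, h0, hN, hs⟩)
    · intro σ hσ
      exact hσ.1.1 a
    · intro σ hσ
      obtain ⟨hc, hR⟩ := hσ
      subst h0; subst hN
      have key : ∀ i ≤ n, (z 0, z i) ∈ σ := by
        intro i hi
        induction i with
        | zero => exact hc.1 _
        | succ j ih =>
          have hj : (z 0, z j) ∈ σ := ih (by omega)
          have hstep : (z j, z (j + 1)) ∈ σ := by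
            rcases hs j (by omega) with h' | h'
            · exact relL_subset hc hR h'
            · exact hc.2.1 _ _ (relL_subset hc hR h')
          exact hc.2.2.1 _ _ _ hj hstep
      exact key n le_rfl
end

section
/- Let A be a commutative semiring, E an equivalence relation on A, and define E^♭ = {(a,b) ∈ A × A : (ax+y, bx+y) ∈ E for all x,y ∈ A}. Then E^♭ is the largest congruence on A contained in E. -/
/-- `E^♭ = {(a,b) : (ax+y, bx+y) ∈ E for all x, y}`. -/
def flatPart {A : Type*} [CommSemiring A] (E : Set (A × A)) : Set (A × A) :=
  {p | ∀ x y : A, (p.1 * x + y, p.2 * x + y) ∈ E}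

/-- If `E` is an equivalence relation on a commutative semiring `A`, then `E^♭` is the
largest congruence on `A` contained in `E`. -/
theorem flatPart_largest_congruence {A : Type*} [CommSemiring A] (E : Set (A × A))
    (hrefl : ∀ a : A, (a, a) ∈ E)
    (hsymm : ∀ a b : A, (a, b) ∈ E → (b, a) ∈ E)
    (htrans : ∀ a b c : A, (a, b) ∈ E → (b, c) ∈ E → (a, c) ∈ E) :
    IsCong (flatPart E) ∧ flatPart E ⊆ E ∧
      ∀ σ : Set (A × A), IsCong σ → σ ⊆ E → σ ⊆ flatPart E := by
  refine ⟨⟨fun a x y => hrefl _, fun a b h x y => hsymm _ _ (h x y),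
    fun a b c hab hbc x y => htrans _ _ _ (hab x y) (hbc x y), ?_, ?_⟩, ?_, ?_⟩
  · intro a b c d hab hcd x y
    have h1 : ((a + c) * x + y, b * x + (c * x + y)) ∈ E := by
      have := hab x (c * x + y); simpa [add_mul, add_assoc] using this
    have h2 : (c * x + (b * x + y), d * x + (b * x + y)) ∈ E := hcd x (b * x + y)
    have h3 : (b * x + (c * x + y), (b + d) * x + y) ∈ E := by
      have e1 : b * x + (c * x + y) = c * x + (b * x + y) := by ring
      have e2 : d * x + (b * x + y) = (b + d) * x + y := by ring
      rw [e1, ← e2]; exact h2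
    exact htrans _ _ _ h1 h3
  · intro a b c d hab hcd x y
    have h1 : (a * c * x + y, b * c * x + y) ∈ E := by
      have := hab (c * x) y; simpa [mul_assoc] using this
    have h2 : (b * c * x + y, b * d * x + y) ∈ E := by
      have := hcd (b * x) y
      have e1 : c * (b * x) + y = b * c * x + y := by ring
      have e2 : d * (b * x) + y = b * d * x + y := by ring
      rw [e1, e2] at this; exact this
    exact htrans _ _ _ h1 h2
  · intro p hp
    have := hp 1 0
    simpa using this
  · rintro σ ⟨hr, hs, ht, ha, hm⟩ hsub ⟨a, b⟩ hab x y
    exact hsub (ha _ _ _ _ (hm _ _ _ _ hab (hr x)) (hr y))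
end
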